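/- Let A = kQ/I be a bound quiver algebra. Then A is a UMP algebra if and only if A_N = kQ_N/I_N is a UMP algebra for every weakly connected component N of the ramifications graph G_{Q,I}. -/

import Mathlib

namespace UMPPaper

variable {V A : Type}

/-- A (non-trivial) path in the quiver with source/target maps `s`, `t`,
represented as a nonempty list of composable arrows. -/
def IsPath (s t : A → V) (p : List A) : Prop :=
  p ≠ [] ∧ p.Chain' (fun a b => t a = s b)

/-- `Q` is a cyclic quiver: there is a repetition-free path through all arrows
(and all vertices) whose target equals its source. -/
def IsCyclicQuiver (s t : A → V) : Prop :=
  ∃ p : List A, IsPath s t p ∧ p.Nodup ∧ (∀ a : A, a ∈ p) ∧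
    (∀ v : V, ∃ a ∈ p, s a = v ∨ t a = v) ∧
    (∃ x ∈ p.getLast?, ∃ y ∈ p.head?, t x = s y)

/-- `Φ_a`: paths containing the arrow `a` as a subpath, all of whose
intermediate vertices have exactly one incoming and exactly one outgoing arrow. -/
def Phi (s t : A → V) (a : A) : Set (List A) :=
  {p | IsPath s t p ∧ [a] <:+: p ∧
    ∀ x ∈ p.dropLast, (∃! b : A, s b = t x) ∧ (∃! b : A, t b = t x)}

/-- Specification of the assignment `a ↦ ω_a`. -/
def OmegaSpec (s t : A → V) (ω : A → List A) : Prop :=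
  (IsCyclicQuiver s t → ∃ p : List A, IsPath s t p ∧ p.Nodup ∧ (∀ a : A, a ∈ p) ∧
      (∃ x ∈ p.getLast?, ∃ y ∈ p.head?, t x = s y) ∧ ∀ a : A, ω a = p) ∧
  (¬ IsCyclicQuiver s t →
    ∀ a : A, ω a ∈ Phi s t a ∧ ∀ q ∈ Phi s t a, q.length ≤ (ω a).length)

/-- The quiver is connected (as an undirected graph on vertices). -/
def QConnected (s t : A → V) : Prop :=
  ∀ u v : V, Relation.ReflTransGen
    (fun x y => ∃ a : A, (s a = x ∧ t a = y) ∨ (s a = y ∧ t a = x)) u v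

/-! ## Bound quiver algebras: the ideal `I` is abstracted by the set `Zi` of paths lying in it. -/

/-- The set of paths lying in a (two-sided) ideal is closed under taking super-paths. -/
def ZeroClosed (Zi : List A → Prop) : Prop :=
  ∀ p q : List A, Zi p → p <:+: q → Zi q

/-- Path-level content of admissibility: `I ⊆ R², Rᵐ ⊆ I` for some `m ≥ 2`. -/
def Admissible (s t : A → V) (Zi : List A → Prop) : Prop :=
  (∀ p : List A, Zi p → 2 ≤ p.length) ∧
  ∃ m : ℕ, 2 ≤ m ∧ ∀ p : List A, IsPath s t p → m ≤ p.length → Zi p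

/-- `t(p) = s(q)` and the junction (last arrow of `p`)·(first arrow of `q`) is not in `I`. -/
def JunctionOK (s t : A → V) (Zi : List A → Prop) (p q : List A) : Prop :=
  ∃ x ∈ p.getLast?, ∃ y ∈ q.head?, t x = s y ∧ ¬ Zi [x, y]

/-- Directed edge of the ramifications graph, on path-vertices. -/
def REdgeP (s t : A → V) (Zi : List A → Prop) (p q : List A) : Prop :=
  p ≠ q ∧ JunctionOK s t Zi p q

/-- Directed edge `ω_a → ω_b` of the ramifications graph `G_{Q,I}`. -/
def REdge (s t : A → V) (Zi : List A → Prop) (ω : A → List A) (a b : A) : Prop :=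
  REdgeP s t Zi (ω a) (ω b)

/-- Undirected adjacency (including equality of vertices) used for weak connectivity. -/
def RAdj (s t : A → V) (Zi : List A → Prop) (ω : A → List A) (a b : A) : Prop :=
  ω a = ω b ∨ REdge s t Zi ω a b ∨ REdge s t Zi ω b a

/-- `a` and `b` lie in the same weakly connected component of `G_{Q,I}`. -/
def SameComp (s t : A → V) (Zi : List A → Prop) (ω : A → List A) (a b : A) : Prop :=
  Relation.ReflTransGen (RAdj s t Zi ω) a b

/-- `N` (a set of arrows) is (the arrow set `(Q_N)₁` of) a weakly connected
component of the ramifications graph `G_{Q,I}`. -/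
def IsComp (s t : A → V) (Zi : List A → Prop) (ω : A → List A) (N : Set A) : Prop :=
  ∃ a : A, N = {b | SameComp s t Zi ω a b}

/-- A path of the subquiver `Q_N`. -/
def PathIn (s t : A → V) (N : Set A) (p : List A) : Prop :=
  IsPath s t p ∧ ∀ x ∈ p, x ∈ N

/-- `m` is (a representative of) a maximal path of `A_N = kQ_N/I_N`
(for `N = Set.univ` this is a maximal path of `A = kQ/I`). -/
def MaxPathIn (s t : A → V) (Zi : List A → Prop) (N : Set A) (m : List A) : Prop :=
  PathIn s t N m ∧ ¬ Zi m ∧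
  (∀ α ∈ N, (∃ x ∈ m.getLast?, t x = s α) → Zi (m ++ [α])) ∧
  (∀ α ∈ N, (∃ x ∈ m.head?, t α = s x) → Zi (α :: m))

/-- `A_N` is a UMP algebra: any two non-disjoint maximal paths coincide. -/
def UMPin (s t : A → V) (Zi : List A → Prop) (N : Set A) : Prop :=
  ∀ m m' : List A, MaxPathIn s t Zi N m → MaxPathIn s t Zi N m' →
    (∃ a, a ∈ m ∧ a ∈ m') → m = m'

/-- `A = kQ/I` is special multiserial: every arrow has at most one right and at
most one left arrow-extension outside `I`. -/
def SpecialMultiserial (s t : A → V) (Zi : List A → Prop) : Prop :=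
  ∀ α β γ : A,
    ((t α = s β ∧ ¬ Zi [α, β]) → (t α = s γ ∧ ¬ Zi [α, γ]) → β = γ) ∧
    ((t β = s α ∧ ¬ Zi [β, α]) → (t γ = s α ∧ ¬ Zi [γ, α]) → β = γ)

/-- `ws = [ω_0, …, ω_n]` is the enumeration of the vertices of the component `N`
in edge order; `ω(N) = ws.flatten`. -/
def CompEnum (s t : A → V) (Zi : List A → Prop) (ω : A → List A)
    (N : Set A) (ws : List (List A)) : Prop :=
  ws ≠ [] ∧ ws.Nodup ∧ (∀ p, p ∈ ws ↔ ∃ a ∈ N, ω a = p) ∧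
  ws.Chain' (fun p q => JunctionOK s t Zi p q) ∧ IsPath s t ws.flatten

/-- `W^{(l)}`, the `l`-fold concatenation of `W`. -/
def cyclePow (W : List A) (l : ℕ) : List A := (List.replicate l W).flatten

/-- `R` is a minimal set of zero relations generating `I_N` (so `A_N` is monomial). -/
def MinGen (s t : A → V) (Zi : List A → Prop) (N : Set A) (R : Set (List A)) : Prop :=
  (∀ r ∈ R, PathIn s t N r ∧ Zi r) ∧
  (∀ p, PathIn s t N p → (Zi p ↔ ∃ r ∈ R, r <:+: p)) ∧
  (∀ r ∈ R, ∀ r' ∈ R, r <:+: r' → r = r')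

/-- `r` is a quadratic junction relation `ω_a^{l_a} ω_b^0` with `a, b ∈ (Q_N)₁`. -/
def IsJuncRel (ω : A → List A) (N : Set A) (r : List A) : Prop :=
  ∃ a ∈ N, ∃ b ∈ N, ∃ x ∈ (ω a).getLast?, ∃ y ∈ (ω b).head?, r = [x, y]

/-- `S_N = R_N \ Ω_N`. -/
def SRel (ω : A → List A) (N : Set A) (R : Set (List A)) : Set (List A) :=
  {r ∈ R | ¬ IsJuncRel ω N r}

/-- The order `≤_f` on arrows given by position along `W = ω(N)`. -/
def leF (W : List A) (α β : A) : Prop :=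
  ∃ u u' : List A, W = u ++ α :: u' ∧ β ∈ α :: u'

/-- The order `≤_s` on relations: comparison of first arrows. -/
def leS (W : List A) (u v : List A) : Prop :=
  ∃ x ∈ u.head?, ∃ y ∈ v.head?, leF W x y

/-- `ss = [s_1, …, s_k]` enumerates `S` in strictly increasing `≤_s` order. -/
def SEnum (W : List A) (S : Set (List A)) (ss : List (List A)) : Prop :=
  ss.Nodup ∧ (∀ r, r ∈ ss ↔ r ∈ S) ∧ ss.Chain' (fun u v => leS W u v ∧ u ≠ v)

/-- `m` is one of the paths `m_i`, `0 ≤ i ≤ k`, of the definition of `S_N^*`.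
Note that `ω_n^{l_n} ω_0^0 ∈ I_N` is expressed by `¬ JunctionOK s t Zi W W`. -/
def IsMi (s t : A → V) (Zi : List A → Prop) (W : List A)
    (ss : List (List A)) (m : List A) : Prop :=
  -- case `0 < i < k`
  (∃ p ∈ ss.zip ss.tail, ∃ u v v' : List A, ∃ x ∈ p.1.head?, ∃ y ∈ p.2.head?,
      W = u ++ [x] ++ v ++ [y] ++ v' ∧ m = v ++ p.2.dropLast) ∨
  -- case `i = 0`, `ω_n^{l_n} ω_0^0 ∈ I_N`
  (¬ JunctionOK s t Zi W W ∧
    ∃ s1 ∈ ss.head?, ∃ u z : List A, W = u ++ s1 ++ z ∧ m = u ++ s1.dropLast) ∨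
  -- case `i = k`, `ω_n^{l_n} ω_0^0 ∈ I_N`
  (¬ JunctionOK s t Zi W W ∧
    ∃ sk ∈ ss.getLast?, ∃ v z : List A, W = z ++ sk ++ v ∧ m = sk.tail ++ v) ∨
  -- case `i ∈ {0, k}`, `ω_n^{l_n} ω_0^0 ∉ I_N`
  (JunctionOK s t Zi W W ∧
    ∃ s1 ∈ ss.head?, ∃ sk ∈ ss.getLast?, ∃ u v z z' : List A,
      ∃ x ∈ s1.head?, ∃ y ∈ sk.head?,
      W = u ++ [x] ++ z ∧ W = z' ++ [y] ++ v ∧ m = v ++ u ++ s1.dropLast)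

/-- `r` is an `ω`-relation: a zero relation of length greater than two which is the
unique element of `I` dividing it. -/
def IsOmegaRel (s t : A → V) (Zi : List A → Prop) (r : List A) : Prop :=
  IsPath s t r ∧ Zi r ∧ 3 ≤ r.length ∧ ∀ r' : List A, Zi r' → r' <:+: r → r' = r


/-! ### Auxiliary development -/

/-- Local uniqueness condition on interior vertices of `p`. -/
def Good (s t : A → V) (p : List A) : Prop :=
  ∀ x ∈ p.dropLast, (∃! b : A, s b = t x) ∧ (∃! b : A, t b = t x)

lemma mem_dropLast_of_infix {p q : List A} (h : p <:+: q) {x : A}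
    (hx : x ∈ p.dropLast) : x ∈ q.dropLast := by
  obtain ⟨l, r, rfl⟩ := h
  rcases eq_or_ne r [] with rfl | hr
  · rcases eq_or_ne p [] with rfl | hp
    · simp at hx
    · rw [List.append_nil, List.dropLast_append_of_ne_nil hp]
      exact List.mem_append_right _ hx
  · rw [List.append_assoc, List.dropLast_append_of_ne_nil (by simp [hr]),
      List.dropLast_append_of_ne_nil hr]
    exact List.mem_append_right _ (List.mem_append_left _ (List.dropLast_subset _ hx))

lemma good_infix {s t : A → V} {p q : List A} (h : Good s t q) (hpq : p <:+: q) :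
    Good s t p := fun x hx => h x (mem_dropLast_of_infix hpq hx)

lemma splice {s t : A → V} {a : A} {u v u' v' : List A}
    (hpc : List.Chain' (fun p q => t p = s q) (u ++ a :: v))
    (hqc : List.Chain' (fun p q => t p = s q) (u' ++ a :: v'))
    (hGp : Good s t (u ++ a :: v)) (hGq : Good s t (u' ++ a :: v')) :
    (u ++ a :: v') ∈ Phi s t a := by
  obtain ⟨hu, hav, hj⟩ := List.isChain_append.mp hpc
  obtain ⟨hu', hav', hj'⟩ := List.isChain_append.mp hqc
  refine ⟨⟨by simp, List.isChain_append.mpr ⟨hu, hav', ?_⟩⟩, ⟨u, v', by simp⟩, ?_⟩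
  · intro z hz w hw
    simp only [List.head?_cons, Option.mem_def, Option.some.injEq] at hw
    subst hw
    exact hj z hz a (by simp)
  · intro z hz
    rw [List.dropLast_append_of_ne_nil (by simp)] at hz
    rcases List.mem_append.mp hz with h | h
    · exact hGp z (by
        rw [List.dropLast_append_of_ne_nil (by simp)]
        exact List.mem_append_left _ h)
    · exact hGq z (by
        rw [List.dropLast_append_of_ne_nil (by simp)]
        exact List.mem_append_right _ h)

lemma front_comp {s t : A → V} :
    ∀ (n : ℕ) (a : A) (u v u' v' : List A), v.length ≤ n →
    List.Chain' (fun p q => t p = s q) (u ++ a :: v) →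
    List.Chain' (fun p q => t p = s q) (u' ++ a :: v') →
    Good s t (u ++ a :: v) →
    v <+: v' ∨ v' <+: v := by
  intro n
  induction n with
  | zero =>
    intro a u v u' v' hn _ _ _
    rw [List.length_eq_zero_iff.mp (Nat.le_zero.mp hn)]
    exact Or.inl (List.nil_prefix)
  | succ n ih =>
    intro a u v u' v' hn hp hq hG
    cases v with
    | nil => exact Or.inl (List.nil_prefix)
    | cons c v2 =>
      cases v' with
      | nil => exact Or.inr (List.nil_prefix)
      | cons c' v2' =>
        have hGa := hG a (by
          rw [List.dropLast_append_of_ne_nil (by simp)]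
          simp)
        have hsc : s c = t a :=
          ((List.isChain_cons_cons.mp ((List.isChain_append.mp hp).2.1)).1).symm
        have hsc' : s c' = t a :=
          ((List.isChain_cons_cons.mp ((List.isChain_append.mp hq).2.1)).1).symm
        obtain ⟨b, -, hb⟩ := hGa.1
        have hcc : c = c' := (hb c hsc).trans (hb c' hsc').symm
        subst hcc
        have hre : ∀ (w : List A) (v₀ : List A), w ++ a :: c :: v₀ = (w ++ [a]) ++ c :: v₀ := by
          intro w v₀; simp
        rw [hre] at hp hG
        rw [hre] at hq
        have := ih c (u ++ [a]) v2 (u' ++ [a]) v2' (Nat.succ_le_succ_iff.mp hn) hp hq hG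
        rcases this with h | h
        · exact Or.inl (List.cons_prefix_cons.mpr ⟨rfl, h⟩)
        · exact Or.inr (List.cons_prefix_cons.mpr ⟨rfl, h⟩)

lemma back_comp {s t : A → V} :
    ∀ (n : ℕ) (a : A) (u v u' v' : List A), u.length ≤ n →
    List.Chain' (fun p q => t p = s q) (u ++ a :: v) →
    List.Chain' (fun p q => t p = s q) (u' ++ a :: v') →
    Good s t (u ++ a :: v) →
    u <:+ u' ∨ u' <:+ u := by
  intro n
  induction n with
  | zero =>
    intro a u v u' v' hn _ _ _
    rw [List.length_eq_zero_iff.mp (Nat.le_zero.mp hn)]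
    exact Or.inl (List.nil_suffix)
  | succ n ih =>
    intro a u v u' v' hn hp hq hG
    rcases List.eq_nil_or_concat u with rfl | ⟨u2, x0, rfl⟩
    · exact Or.inl (List.nil_suffix)
    rcases List.eq_nil_or_concat u' with rfl | ⟨u2', x0', rfl⟩
    · exact Or.inr (List.nil_suffix)
    have h1 : t x0 = s a := by
      have := (List.isChain_append.mp hp).2.2
      simp only [List.concat_eq_append, List.getLast?_concat] at this
      exact this x0 rfl a (by simp)
    have h1' : t x0' = s a := by
      have := (List.isChain_append.mp hq).2.2
      simp only [List.concat_eq_append, List.getLast?_concat] at this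
      exact this x0' rfl a (by simp)
    have hGx := hG x0 (by
      rw [List.concat_eq_append, List.append_assoc,
        List.dropLast_append_of_ne_nil (by simp)]
      simp)
    obtain ⟨b, -, hb⟩ := hGx.2
    have hxx : x0 = x0' := (hb x0 rfl).trans (hb x0' (h1'.trans h1.symm)).symm
    subst hxx
    have hre : ∀ (w w₀ : List A), w.concat x0 ++ a :: w₀ = w ++ x0 :: a :: w₀ := by
      intro w w₀; simp
    rw [hre] at hp hG
    rw [hre] at hq
    have hlen : u2.length ≤ n := by
      have : u2.length + 1 ≤ n + 1 := by simpa using hn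
      omega
    rcases ih x0 u2 (a :: v) u2' (a :: v') hlen hp hq hG with h | h
    · obtain ⟨w, hw⟩ := h
      exact Or.inl ⟨w, by simp [← hw]⟩
    · obtain ⟨w, hw⟩ := h
      exact Or.inr ⟨w, by simp [← hw]⟩

lemma phi_max_unique {s t : A → V} {a : A} {p q : List A}
    (hp : p ∈ Phi s t a) (hq : q ∈ Phi s t a)
    (hmax : ∀ r ∈ Phi s t a, r.length ≤ p.length) (hlen : p.length ≤ q.length) :
    p = q := by
  obtain ⟨⟨hpne, hpc⟩, ⟨u, v, hpd⟩, hGp⟩ := hp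
  obtain ⟨⟨hqne, hqc⟩, ⟨u', v', hqd⟩, hGq⟩ := hq
  simp only [List.append_assoc, List.singleton_append] at hpd hqd
  subst hpd hqd
  have hs1 := hmax _ (splice hpc hqc hGp hGq)
  have hs2 := hmax _ (splice hqc hpc hGq hGp)
  simp only [List.length_append, List.length_cons] at hs1 hs2 hlen
  have hvl : v.length = v'.length := by omega
  have hul : u.length = u'.length := by omega
  have hv : v = v' := by
    rcases front_comp v.length a u v u' v' le_rfl hpc hqc hGp with h | h
    · exact h.eq_of_length hvl
    · exact (h.eq_of_length hvl.symm).symm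
  have hu : u = u' := by
    rcases back_comp u.length a u v u' v' le_rfl hpc hqc hGp with h | h
    · exact h.eq_of_length hul
    · exact (h.eq_of_length hul.symm).symm
  rw [hu, hv]

/-- Key lemma: a composable pair of arrows whose junction is not in `I`
consists of adjacent arrows in the ramifications graph. -/
lemma radj_of_junction {s t : A → V} {Zi : List A → Prop} {ω : A → List A}
    (hω : OmegaSpec s t ω) {x y : A} (hxy : t x = s y) (hnz : ¬ Zi [x, y]) :
    RAdj s t Zi ω x y := by
  by_cases hcyc : IsCyclicQuiver s t
  · obtain ⟨p, -, -, -, -, hall⟩ := hω.1 hcyc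
    exact Or.inl ((hall x).trans (hall y).symm)
  obtain ⟨hx, hxmax⟩ := hω.2 hcyc x
  obtain ⟨hy, hymax⟩ := hω.2 hcyc y
  obtain ⟨⟨hxne, hxc⟩, ⟨u, v, hxd⟩, hGx⟩ := hx
  obtain ⟨⟨hyne, hyc⟩, ⟨u', v', hyd⟩, hGy⟩ := hy
  simp only [List.append_assoc, List.singleton_append] at hxd hyd
  rw [← hxd] at hxc hGx
  rw [← hyd] at hyc hGy
  cases v with
  | cons c v2 =>
    -- identify the successor of x with y
    have hGxx := hGx x (by
      rw [List.dropLast_append_of_ne_nil (by simp)]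
      simp)
    have hsc : s c = t x :=
      ((List.isChain_cons_cons.mp ((List.isChain_append.mp hxc).2.1)).1).symm
    obtain ⟨b, -, hb⟩ := hGxx.1
    have hcy : y = c := (hb y hxy.symm).trans (hb c hsc).symm
    subst hcy
    rcases List.eq_nil_or_concat u' with rfl | ⟨u2', x0, rfl⟩
    · -- y is the head of ω y : contradiction with maximality of ω y
      exfalso
      have hsp : ((u ++ [x]) ++ y :: v') ∈ Phi s t y := by
        have h1 : List.Chain' (fun p q => t p = s q) ((u ++ [x]) ++ y :: v2) := by
          rw [List.append_assoc, List.singleton_append]; exact hxc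
        have h2 : Good s t ((u ++ [x]) ++ y :: v2) := by
          rw [List.append_assoc, List.singleton_append]; exact hGx
        exact splice (u' := []) h1 hyc h2 hGy
      have := hymax _ hsp
      rw [← hyd] at this
      simp at this
      omega
    · -- identify the predecessor of y with x; then ω x = ω y
      have h1 : t x0 = s y := by
        have := (List.isChain_append.mp hyc).2.2
        simp only [List.concat_eq_append, List.getLast?_concat] at this
        exact this x0 rfl y (by simp)
      have hre : u2'.concat x0 ++ y :: v' = u2' ++ x0 :: y :: v' := by simp
      rw [hre] at hyc hGy hyd
      have hGyx := hGy x0 (by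
        rw [List.dropLast_append_of_ne_nil (by simp)]
        simp)
      obtain ⟨b', -, hb'⟩ := hGyx.2
      have hxx : x = x0 := (hb' x (hxy.trans h1.symm)).trans (hb' x0 rfl).symm
      subst hxx
      have hxPhiY : ω x ∈ Phi s t y :=
        ⟨⟨hxne, by rw [← hxd]; exact hxc⟩, ⟨u ++ [x], v2, by rw [← hxd]; simp⟩,
          by rw [← hxd]; exact hGx⟩
      have hyPhiX : ω y ∈ Phi s t x :=
        ⟨⟨hyne, by rw [← hyd]; exact hyc⟩, ⟨u2', y :: v', by rw [← hyd]; simp⟩,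
          by rw [← hyd]; exact hGy⟩
      have hyPhiY : ω y ∈ Phi s t y :=
        ⟨⟨hyne, by rw [← hyd]; exact hyc⟩, ⟨u2' ++ [x], v', by rw [← hyd]; simp⟩,
          by rw [← hyd]; exact hGy⟩
      have h2 : (ω y).length ≤ (ω x).length := hxmax _ hyPhiX
      exact Or.inl (phi_max_unique hyPhiY hxPhiY hymax h2).symm
  | nil =>
    rcases List.eq_nil_or_concat u' with rfl | ⟨u2', x0, rfl⟩
    · -- x is last of ω x, y is head of ω y : junction edge
      by_cases he : ω x = ω y
      · exact Or.inl he
      · refine Or.inr (Or.inl ⟨he, x, ?_, y, ?_, hxy, hnz⟩)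
        · rw [← hxd]; simp
        · rw [← hyd]; simp
    · -- predecessor of y is x, but x is last of ω x : contradiction
      exfalso
      have h1 : t x0 = s y := by
        have := (List.isChain_append.mp hyc).2.2
        simp only [List.concat_eq_append, List.getLast?_concat] at this
        exact this x0 rfl y (by simp)
      have hre : u2'.concat x0 ++ y :: v' = u2' ++ x0 :: y :: v' := by simp
      rw [hre] at hyc hGy hyd
      have hGyx := hGy x0 (by
        rw [List.dropLast_append_of_ne_nil (by simp)]
        simp)
      obtain ⟨b', -, hb'⟩ := hGyx.2
      have hxx : x = x0 := (hb' x (hxy.trans h1.symm)).trans (hb' x0 rfl).symm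
      subst hxx
      have hsp : (u ++ x :: (y :: v')) ∈ Phi s t x := splice hxc hyc hGx hGy
      have := hxmax _ hsp
      rw [← hxd] at this
      simp at this


lemma radj_symm {s t : A → V} {Zi : List A → Prop} {ω : A → List A} :
    Symmetric (RAdj s t Zi ω) := by
  intro a b h
  rcases h with h | h | h
  · exact Or.inl h.symm
  · exact Or.inr (Or.inr h)
  · exact Or.inr (Or.inl h)

lemma samecomp_symm {s t : A → V} {Zi : List A → Prop} {ω : A → List A} {a b : A}
    (h : SameComp s t Zi ω a b) : SameComp s t Zi ω b a :=
  (@Relation.ReflTransGen.stdSymm _ _ ⟨fun _ _ h => radj_symm h⟩).symm _ _ h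

lemma samecomp_of_mem {s t : A → V} {Zi : List A → Prop} {ω : A → List A}
    (hω : OmegaSpec s t ω) (hZ : ZeroClosed Zi) :
    ∀ m : List A, m.Chain' (fun a b => t a = s b) → ¬ Zi m →
      ∀ x ∈ m, ∀ y ∈ m, SameComp s t Zi ω x y := by
  intro m
  induction m with
  | nil => intro _ _ x hx; simp at hx
  | cons c rest ih =>
    intro hc hnz x hx y hy
    have key : ∀ z ∈ c :: rest, SameComp s t Zi ω c z := by
      intro z hz
      rcases List.mem_cons.mp hz with rfl | hz
      · exact Relation.ReflTransGen.refl
      · cases rest with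
        | nil => simp at hz
        | cons d rest2 =>
          have hcd : t c = s d := (List.isChain_cons_cons.mp hc).1
          have hnzcd : ¬ Zi [c, d] := fun h => hnz (hZ _ _ h ⟨[], rest2, by simp⟩)
          have h1 : SameComp s t Zi ω c d :=
            Relation.ReflTransGen.single (radj_of_junction hω hcd hnzcd)
          have h2 := ih (List.isChain_cons_cons.mp hc).2
            (fun h => hnz (hZ _ _ h ⟨[c], [], by simp⟩)) d (by simp) z hz
          exact h1.trans h2
    exact (samecomp_symm (key x hx)).trans (key y hy)

lemma max_univ_of_maxN {s t : A → V} {Zi : List A → Prop} {ω : A → List A}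
    (hω : OmegaSpec s t ω) (hZ : ZeroClosed Zi) {a₀ : A} {m : List A}
    (hm : MaxPathIn s t Zi {b | SameComp s t Zi ω a₀ b} m) :
    MaxPathIn s t Zi Set.univ m := by
  obtain ⟨⟨hpath, hmem⟩, hnz, hR, hL⟩ := hm
  refine ⟨⟨hpath, fun x _ => trivial⟩, hnz, ?_, ?_⟩
  · rintro α - ⟨x, hx, hxα⟩
    by_cases hzi : Zi [x, α]
    · refine hZ _ _ hzi ⟨m.dropLast, [], ?_⟩
      rw [show m.dropLast ++ [x, α] ++ [] = (m.dropLast ++ [x]) ++ [α] by simp,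
        List.dropLast_append_getLast? x hx]
    · have hxm : x ∈ m := List.mem_of_mem_getLast? hx
      have hcomp : SameComp s t Zi ω a₀ α :=
        (hmem x hxm).trans (Relation.ReflTransGen.single (radj_of_junction hω hxα hzi))
      exact hR α hcomp ⟨x, hx, hxα⟩
  · rintro α - ⟨x, hx, hαx⟩
    have hxm : x ∈ m := List.mem_of_mem_head? hx
    by_cases hzi : Zi [α, x]
    · obtain ⟨m', rfl⟩ : ∃ m', m = x :: m' := by
        cases m with
        | nil => simp at hx
        | cons a l =>
          simp only [List.head?_cons, Option.mem_def, Option.some.injEq] at hx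
          exact ⟨l, by rw [hx]⟩
      exact hZ _ _ hzi ⟨[], m', by simp⟩
    · have hcomp : SameComp s t Zi ω a₀ α :=
        (hmem x hxm).trans
          (samecomp_symm (Relation.ReflTransGen.single (radj_of_junction hω hαx hzi)))
      exact hL α hcomp ⟨x, hx, hαx⟩

lemma maxN_of_max_univ {s t : A → V} {Zi : List A → Prop} {ω : A → List A}
    (hω : OmegaSpec s t ω) (hZ : ZeroClosed Zi) {m : List A} {c : A}
    (hm : MaxPathIn s t Zi Set.univ m) (hc : c ∈ m) :
    MaxPathIn s t Zi {b | SameComp s t Zi ω c b} m := by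
  obtain ⟨⟨hpath, -⟩, hnz, hR, hL⟩ := hm
  exact ⟨⟨hpath, fun x hx => samecomp_of_mem hω hZ m hpath.2 hnz c hc x hx⟩, hnz,
    fun α _ h => hR α (Set.mem_univ α) h, fun α _ h => hL α (Set.mem_univ α) h⟩

/-- `A` is a UMP algebra iff `A_N` is a UMP algebra for every weakly
connected component `N` of the ramifications graph `G_{Q,I}`. -/
theorem stmt_7 [Fintype V] [Fintype A] (s t : A → V) (Zi : List A → Prop)
    (ω : A → List A) (hω : OmegaSpec s t ω)
    (hZ : ZeroClosed Zi) (hadm : Admissible s t Zi) :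
    UMPin s t Zi Set.univ ↔ ∀ N : Set A, IsComp s t Zi ω N → UMPin s t Zi N := by
  constructor
  · rintro h N ⟨a₀, rfl⟩ m m' hm hm' hshare
    exact h m m' (max_univ_of_maxN hω hZ hm) (max_univ_of_maxN hω hZ hm') hshare
  · rintro h m m' hm hm' ⟨c, hcm, hcm'⟩
    exact h {b | SameComp s t Zi ω c b} ⟨c, rfl⟩ m m'
      (maxN_of_max_univ hω hZ hm hcm) (maxN_of_max_univ hω hZ hm' hcm') ⟨c, hcm, hcm'⟩

end UMPPaper
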